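/- Let Δ ≥ 3 and R ≥ 2 be integers and ε a real with 0 < ε ≤ 1/(8R ln Δ). Let D : ℕ × ℕ → ℝ≥0 be a function satisfying: (i) D(k, ℓ) ≤ k for all k, ℓ; (ii) D(k, 0) ≤ Δ^R for all k; and (iii) for all k ≥ 1 and ℓ ≥ 1, D(k, ℓ) ≤ D(k−1, ℓ−1) + (ε/ℓ)·(max_{m ≤ Δ^R} D(k−1, m) + 1). Then for all k and ℓ, D(k, ℓ) ≤ (1 + 2ε·H(ℓ))·Δ^R, where H(ℓ) = Σ_{i=1}^{ℓ} 1/i for ℓ ≥ 1 and H(0) = 0. -/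

import Mathlib

open Finset

/-- The abstract recursion underlying the coupling analysis: any nonnegative function `D`
satisfying the recursive bound is bounded by `(1 + 2εH(ℓ))·Δ^R`. -/
theorem recursion_bound (Δ R : ℕ) (hΔ : 3 ≤ Δ) (hR : 2 ≤ R)
    (ε : ℝ) (hε0 : 0 < ε) (hε : ε ≤ 1 / (8 * R * Real.log Δ))
    (D : ℕ → ℕ → ℝ) (hD0 : ∀ k l, 0 ≤ D k l)
    (h1 : ∀ k l, D k l ≤ (k : ℝ))
    (h2 : ∀ k, D k 0 ≤ (Δ : ℝ) ^ R)
    (h3 : ∀ k l : ℕ, D (k + 1) (l + 1) ≤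
      D k l + (ε / ((l : ℝ) + 1)) *
        ((Finset.range (Δ ^ R + 1)).sup' Finset.nonempty_range_add_one (fun m => D k m) + 1)) :
    ∀ k l : ℕ, D k l ≤ (1 + 2 * ε * ∑ i ∈ Finset.range l, (1 : ℝ) / (i + 1)) * (Δ : ℝ) ^ R := by
  set H : ℕ → ℝ := fun l => ∑ i ∈ Finset.range l, (1 : ℝ) / (i + 1) with hHdef
  have hH0 : ∀ l, 0 ≤ H l := fun l =>
    Finset.sum_nonneg fun i _ => by positivity
  have hHmono : ∀ {a b : ℕ}, a ≤ b → H a ≤ H b := by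
    intro a b hab
    exact Finset.sum_le_sum_of_subset_of_nonneg (Finset.range_subset_range.2 hab)
      (fun i _ _ => by positivity)
  have hP9 : (9 : ℝ) ≤ (Δ : ℝ) ^ R := by
    calc (9 : ℝ) = 3 ^ 2 := by norm_num
    _ ≤ (3 : ℝ) ^ R := by
        apply pow_le_pow_right₀ (by norm_num) hR
    _ ≤ (Δ : ℝ) ^ R := by
        apply pow_le_pow_left₀ (by norm_num)
        exact_mod_cast hΔ
  have hP0 : (0 : ℝ) ≤ (Δ : ℝ) ^ R := by positivity
  have hlog3 : (1 : ℝ) ≤ Real.log 3 := by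
    rw [Real.le_log_iff_exp_le (by norm_num)]
    calc Real.exp 1 ≤ 2.7182818286 := Real.exp_one_lt_d9.le
    _ ≤ 3 := by norm_num
  have hlogΔ : (1 : ℝ) ≤ Real.log Δ := by
    refine hlog3.trans (Real.log_le_log (by norm_num) ?_)
    exact_mod_cast hΔ
  have hR2 : (2 : ℝ) ≤ (R : ℝ) := by exact_mod_cast hR
  have hRlog : (2 : ℝ) ≤ (R : ℝ) * Real.log Δ := by nlinarith
  -- harmonic bound
  have hHlog : H (Δ ^ R) ≤ 1 + (R : ℝ) * Real.log Δ := by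
    have h1' : H (Δ ^ R) = ((harmonic (Δ ^ R) : ℚ) : ℝ) := by
      rw [hHdef]; push_cast [harmonic]
      refine Finset.sum_congr rfl fun i _ => by rw [one_div]
    rw [h1']
    have := harmonic_le_one_add_log (Δ ^ R)
    rw [Nat.cast_pow, Real.log_pow] at this
    exact this
  have hεH : 2 * ε * H (Δ ^ R) ≤ 3 / 8 := by
    have hx8 : (0 : ℝ) < 8 * (R : ℝ) * Real.log Δ := by nlinarith
    have hεx : ε * (8 * (R : ℝ) * Real.log Δ) ≤ 1 := by
      have := (le_div_iff₀ hx8).mp hε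
      linarith
    have h2' : ε * ((R : ℝ) * Real.log Δ) ≤ 1 / 8 := by nlinarith
    nlinarith [hH0 (Δ ^ R), mul_le_mul_of_nonneg_left hHlog (le_of_lt hε0)]
  -- key: the sup bound plus one is at most 2·Δ^R
  have key : (1 + 2 * ε * H (Δ ^ R)) * (Δ : ℝ) ^ R + 1 ≤ 2 * (Δ : ℝ) ^ R := by
    nlinarith [hH0 (Δ ^ R)]
  intro k
  induction k with
  | zero =>
    intro l
    show D 0 l ≤ (1 + 2 * ε * H l) * (Δ : ℝ) ^ R
    have hle0 : D 0 l ≤ 0 := by simpa using h1 0 l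
    have h0 : (0:ℝ) ≤ 1 + 2 * ε * H l := by nlinarith [hH0 l]
    nlinarith [mul_nonneg h0 hP0]
  | succ k ih =>
    intro l
    cases l with
    | zero =>
      simpa using h2 (k + 1)
    | succ l =>
      show D (k + 1) (l + 1) ≤ (1 + 2 * ε * H (l + 1)) * (Δ : ℝ) ^ R
      have hsup : (Finset.range (Δ ^ R + 1)).sup' Finset.nonempty_range_add_one (fun m => D k m)
          ≤ (1 + 2 * ε * H (Δ ^ R)) * (Δ : ℝ) ^ R := by
        apply Finset.sup'_le
        intro m hm
        have hm' : m ≤ Δ ^ R := Nat.lt_succ_iff.mp (Finset.mem_range.mp hm)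
        have hDm : D k m ≤ (1 + 2 * ε * H m) * (Δ : ℝ) ^ R := ih m
        have hmono : H m ≤ H (Δ ^ R) := hHmono hm'
        refine hDm.trans (mul_le_mul_of_nonneg_right ?_ hP0)
        nlinarith
      have hsup2 : (Finset.range (Δ ^ R + 1)).sup' Finset.nonempty_range_add_one (fun m => D k m) + 1
          ≤ 2 * (Δ : ℝ) ^ R := by linarith
      have hstep := h3 k l
      have hpos : (0 : ℝ) < (l : ℝ) + 1 := by positivity
      have hfrac : (ε / ((l : ℝ) + 1)) *
          ((Finset.range (Δ ^ R + 1)).sup' Finset.nonempty_range_add_one (fun m => D k m) + 1)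
          ≤ (ε / ((l : ℝ) + 1)) * (2 * (Δ : ℝ) ^ R) := by
        apply mul_le_mul_of_nonneg_left hsup2 (by positivity)
      have hHsucc : H (l + 1) = H l + 1 / ((l : ℝ) + 1) := by
        simp only [hHdef, Finset.sum_range_succ]
      have hik : D k l ≤ (1 + 2 * ε * H l) * (Δ : ℝ) ^ R := ih l
      have heq : (ε / ((l : ℝ) + 1)) * (2 * (Δ : ℝ) ^ R)
          = 2 * ε * (1 / ((l : ℝ) + 1)) * (Δ : ℝ) ^ R := by
        field_simp
      have hfinal : D k l + (ε / ((l : ℝ) + 1)) * (2 * (Δ : ℝ) ^ R)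
          ≤ (1 + 2 * ε * H (l + 1)) * (Δ : ℝ) ^ R := by
        rw [hHsucc, heq]
        nlinarith
      calc D (k + 1) (l + 1) ≤ _ := hstep
      _ ≤ D k l + (ε / ((l : ℝ) + 1)) * (2 * (Δ : ℝ) ^ R) := by linarith
      _ ≤ (1 + 2 * ε * H (l + 1)) * (Δ : ℝ) ^ R := hfinal
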